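/- The averaged composition on partition classes is associative: for λ ∈ Part(m,n), μ ∈ Part(l,m) and ν ∈ Part(k,l), one has (δ_λ * δ_μ) * δ_ν = δ_λ * (δ_μ * δ_ν) in K[Part(k,n)]. -/
import Mathlib


open Finset

/-- The multiset of fiber cardinalities of a map `f : Fin a → Fin b`. -/
def proj {a b : ℕ} (f : Fin a → Fin b) : Multiset ℕ :=
  Multiset.map (fun i : Fin b => (Finset.univ.filter fun j => f j = i).card)
    (Finset.univ : Finset (Fin b)).val

/-- The composite `δ_{proj f} * δ_{proj g} = (1/m!) Σ_{σ ∈ S_m} δ_{proj (f∘σ∘g)}`,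
for representatives `f : Fin m → Fin n` and `g : Fin l → Fin m`, with values in the
free `K`-vector space on multisets of natural numbers (in which the free vector
space `K[Part(l,n)]` on partitions embeds). -/
noncomputable def starElt (K : Type) [Field K] {l m n : ℕ}
    (f : Fin m → Fin n) (g : Fin l → Fin m) : Multiset ℕ →₀ K :=
  (m.factorial : K)⁻¹ •
    ∑ σ : Equiv.Perm (Fin m), Finsupp.single (proj (f ∘ ⇑σ ∘ g)) (1 : K)

/-- `δ_λ * δ_μ`, defined via a choice of representatives (independent of the choice). -/
noncomputable def starOf (K : Type) [Field K] (m n l : ℕ) (lam mu : Multiset ℕ) :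
    Multiset ℕ →₀ K :=
  if h : (∃ f : Fin m → Fin n, Function.Surjective f ∧ proj f = lam) ∧
      (∃ g : Fin l → Fin m, Function.Surjective g ∧ proj g = mu) then
    starElt K h.1.choose h.2.choose
  else 0

/-- The composition `* : K[Part(m,n)] × K[Part(l,m)] → K[Part(l,n)]`, as the bilinear
extension of `δ_λ * δ_μ = (1/m!) Σ_{σ ∈ S_m} δ_{proj (f∘σ∘g)}` (representatives
`proj f = λ`, `proj g = μ`). -/
noncomputable def starComp (K : Type) [Field K] (m n l : ℕ)
    (x y : Multiset ℕ →₀ K) : Multiset ℕ →₀ K :=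
  ∑ a ∈ x.support, ∑ b ∈ y.support, (x a * y b) • starOf K m n l a b

/-- The set of order-preserving surjections `Fin m → Fin n`. -/
noncomputable def OSurj (m n : ℕ) : Finset (Fin m → Fin n) :=
  open scoped Classical in
  Finset.univ.filter fun s => Monotone s ∧ Function.Surjective s

/-- `Q_{m,n}`, the uniform average of the `δ_{proj s}` over order-preserving
surjections `s : Fin m → Fin n`. -/
noncomputable def Q (K : Type) [Field K] (m n : ℕ) : Multiset ℕ →₀ K :=
  ((OSurj m n).card : K)⁻¹ • ∑ s ∈ OSurj m n, Finsupp.single (proj s) (1 : K)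

/-- `Ppart K n k = P_{n+k,n}` where `P_{n,n} = δ_{(1^n)}`,
`P_{m+1,n} = P_{m,n} * δ_{(2,1^{m-1})}` (so `P_{m,n} = P_{n+1,n} * … * P_{m,m−1}`). -/
noncomputable def Ppart (K : Type) [Field K] (n : ℕ) : ℕ → (Multiset ℕ →₀ K)
  | 0 => Finsupp.single (Multiset.replicate n 1) 1
  | k + 1 => starComp K (n + k) n (n + k + 1) (Ppart K n k)
      (Finsupp.single (2 ::ₘ Multiset.replicate (n + k - 1) 1) 1)

/-- The monoidal product `⊙ : K[Part(m,n)] × K[Part(m',n')] → K[Part(m+m',n+n')]`,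
bilinear extension of `δ_λ ⊙ δ_μ = (−1)^{(m−n)n'} Q_{m+m',n+n'}`. -/
noncomputable def odot (K : Type) [Field K] (m n m' n' : ℕ)
    (x y : Multiset ℕ →₀ K) : Multiset ℕ →₀ K :=
  ∑ a ∈ x.support, ∑ b ∈ y.support,
    (x a * y b) • ((-1 : K) ^ ((m - n) * n') • Q K (m + m') (n + n'))

/-- the averaged composition on partition classes is associative:
for `λ ∈ Part(m,n)`, `μ ∈ Part(l,m)`, `ν ∈ Part(k,l)` (given by representatives
`f`, `g`, `h`), one has `(δ_λ * δ_μ) * δ_ν = δ_λ * (δ_μ * δ_ν)` in `K[Part(k,n)]`. -/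
lemma exists_perm_comp {α γ : Type*} [Fintype α] [DecidableEq γ] (c c' : α → γ)
    (h : ∀ v, Fintype.card {a // c a = v} = Fintype.card {a // c' a = v}) :
    ∃ e : Equiv.Perm α, ∀ a, c (e a) = c' a := by
  refine ⟨((Equiv.sigmaFiberEquiv c').symm.trans
      (Equiv.sigmaCongrRight fun v => Fintype.equivOfCardEq (h v).symm)).trans
      (Equiv.sigmaFiberEquiv c), fun a => ?_⟩
  exact ((Fintype.equivOfCardEq (h (c' a)).symm) ⟨a, rfl⟩).2

lemma count_proj {a b : ℕ} (u : Fin a → Fin b) (v : ℕ) :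
    Multiset.count v (proj u) =
      (univ.filter fun i : Fin b => (univ.filter fun j => u j = i).card = v).card := by
  classical
  rw [proj, Multiset.count_map]
  show _ = Multiset.card (Multiset.filter _ univ.val)
  congr 1
  apply Multiset.filter_congr
  intro i _
  exact eq_comm

lemma exists_of_proj_eq {a b : ℕ} {f f' : Fin a → Fin b} (hp : proj f = proj f') :
    ∃ (π : Equiv.Perm (Fin b)) (β : Equiv.Perm (Fin a)), ∀ j, π (f (β j)) = f' j := by
  have hcnt : ∀ v : ℕ,
      Fintype.card {i // (univ.filter fun j => f j = i).card = v} =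
      Fintype.card {i // (univ.filter fun j => f' j = i).card = v} := by
    intro v
    rw [Fintype.card_subtype, Fintype.card_subtype, ← count_proj, ← count_proj, hp]
  obtain ⟨π, hπ⟩ := exists_perm_comp
    (fun i => (univ.filter fun j => f j = i).card)
    (fun i => (univ.filter fun j => f' j = i).card) hcnt
  have hfib : ∀ v : Fin b, Fintype.card {j // f j = v} = Fintype.card {j // π (f' j) = v} := by
    intro v
    have e1 : Fintype.card {j // π (f' j) = v} = Fintype.card {j // f' j = π.symm v} := by
      apply Fintype.card_congr
      apply Equiv.subtypeEquivRight
      intro j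
      constructor
      · intro hj; simpa using congrArg π.symm hj
      · intro hj; simpa using congrArg π hj
    rw [e1, Fintype.card_subtype, Fintype.card_subtype]
    have := hπ (π.symm v)
    simp only [Equiv.apply_symm_apply] at this
    exact this
  obtain ⟨β, hβ⟩ := exists_perm_comp f (⇑π ∘ f') hfib
  exact ⟨π.symm, β, fun j => by simpa using congrArg π.symm (hβ j)⟩

lemma proj_comp_perm_right {a b : ℕ} (u : Fin a → Fin b) (δ : Equiv.Perm (Fin a)) :
    proj (u ∘ ⇑δ) = proj u := by
  unfold proj
  apply Multiset.map_congr rfl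
  intro i _
  apply Finset.card_equiv δ
  intro j
  simp [Function.comp]

lemma proj_comp_perm_left {a b : ℕ} (π : Equiv.Perm (Fin b)) (u : Fin a → Fin b) :
    proj (⇑π ∘ u) = proj u := by
  unfold proj
  have h1 : (univ : Finset (Fin b)).val = univ.val.map ⇑π := by
    conv_lhs => rw [← Finset.map_univ_equiv π]
    rfl
  conv_lhs => rw [h1]
  rw [Multiset.map_map]
  apply Multiset.map_congr rfl
  intro i _
  simp [Function.comp, π.injective.eq_iff]

lemma starElt_eq (K : Type) [Field K] {l m n : ℕ} {f f' : Fin m → Fin n} {g g' : Fin l → Fin m}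
    (hpf : proj f = proj f') (hpg : proj g = proj g') :
    starElt K f g = starElt K f' g' := by
  obtain ⟨π, β, hβ⟩ := exists_of_proj_eq hpf
  obtain ⟨γ, δ, hδ⟩ := exists_of_proj_eq hpg
  unfold starElt
  congr 1
  rw [← Equiv.sum_comp ((Equiv.mulLeft β).trans (Equiv.mulRight γ))
    (fun σ => Finsupp.single (proj (f ∘ ⇑σ ∘ g)) (1 : K))]
  apply Finset.sum_congr rfl
  intro σ _
  have key : f' ∘ ⇑σ ∘ g' = ⇑π ∘ ((f ∘ ⇑(β * σ * γ) ∘ g) ∘ ⇑δ) := by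
    funext j
    simp only [Function.comp_apply, Equiv.Perm.mul_apply, ← hβ, ← hδ]
  have : proj (f' ∘ ⇑σ ∘ g') = proj (f ∘ ⇑(β * σ * γ) ∘ g) := by
    rw [key, proj_comp_perm_left, proj_comp_perm_right]
  rw [this]
  rfl

lemma starOf_proj (K : Type) [Field K] {l m n : ℕ} (f : Fin m → Fin n)
    (hf : Function.Surjective f) (g : Fin l → Fin m) (hg : Function.Surjective g) :
    starOf K m n l (proj f) (proj g) = starElt K f g := by
  have hcond : (∃ f₀ : Fin m → Fin n, Function.Surjective f₀ ∧ proj f₀ = proj f) ∧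
      (∃ g₀ : Fin l → Fin m, Function.Surjective g₀ ∧ proj g₀ = proj g) :=
    ⟨⟨f, hf, rfl⟩, ⟨g, hg, rfl⟩⟩
  rw [starOf, dif_pos hcond]
  exact starElt_eq K hcond.1.choose_spec.2 hcond.2.choose_spec.2

lemma starComp_eq_totalL (K : Type) [Field K] (m n l : ℕ) (x y : Multiset ℕ →₀ K) :
    starComp K m n l x y = Finsupp.linearCombination K
      (fun a => ∑ b ∈ y.support, y b • starOf K m n l a b) x := by
  rw [Finsupp.linearCombination_apply, Finsupp.sum, starComp]
  refine Finset.sum_congr rfl fun a _ => ?_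
  rw [Finset.smul_sum]
  exact Finset.sum_congr rfl fun b _ => (smul_smul _ _ _).symm

lemma starComp_eq_totalR (K : Type) [Field K] (m n l : ℕ) (x y : Multiset ℕ →₀ K) :
    starComp K m n l x y = Finsupp.linearCombination K
      (fun b => ∑ a ∈ x.support, x a • starOf K m n l a b) y := by
  rw [Finsupp.linearCombination_apply, Finsupp.sum, starComp, Finset.sum_comm]
  refine Finset.sum_congr rfl fun b _ => ?_
  rw [Finset.smul_sum]
  refine Finset.sum_congr rfl fun a _ => ?_
  rw [smul_smul, mul_comm]

lemma starComp_single_single (K : Type) [Field K] (m n l : ℕ) (a b : Multiset ℕ) :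
    starComp K m n l (Finsupp.single a 1) (Finsupp.single b 1) = starOf K m n l a b := by
  rw [starComp_eq_totalL, Finsupp.linearCombination_single, one_smul,
    Finsupp.support_single_ne_zero b one_ne_zero, Finset.sum_singleton,
    Finsupp.single_eq_same, one_smul]

theorem stmt11 (K : Type) [Field K] [CharZero K] {k l m n : ℕ}
    (f : Fin m → Fin n) (hf : Function.Surjective f)
    (g : Fin l → Fin m) (hg : Function.Surjective g)
    (h : Fin k → Fin l) (hh : Function.Surjective h) :
    starComp K l n k
        (starComp K m n l (Finsupp.single (proj f) 1) (Finsupp.single (proj g) 1))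
        (Finsupp.single (proj h) 1) =
      starComp K m n k (Finsupp.single (proj f) 1)
        (starComp K l m k (Finsupp.single (proj g) 1) (Finsupp.single (proj h) 1)) := by
  have hsg : ∀ σ : Equiv.Perm (Fin m), Function.Surjective (f ∘ ⇑σ ∘ g) :=
    fun σ => hf.comp (σ.surjective.comp hg)
  have hth : ∀ τ : Equiv.Perm (Fin l), Function.Surjective (g ∘ ⇑τ ∘ h) :=
    fun τ => hg.comp (τ.surjective.comp hh)
  have E1 : starComp K m n l (Finsupp.single (proj f) 1) (Finsupp.single (proj g) 1)
      = starElt K f g := by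
    rw [starComp_single_single, starOf_proj K f hf g hg]
  have E2 : starComp K l m k (Finsupp.single (proj g) 1) (Finsupp.single (proj h) 1)
      = starElt K g h := by
    rw [starComp_single_single, starOf_proj K g hg h hh]
  rw [E1, E2]
  have L : starComp K l n k (starElt K f g) (Finsupp.single (proj h) 1)
      = (m.factorial : K)⁻¹ • ∑ σ : Equiv.Perm (Fin m), starElt K (f ∘ ⇑σ ∘ g) h := by
    rw [starComp_eq_totalL, starElt, map_smul, map_sum]
    congr 1
    refine Finset.sum_congr rfl fun σ _ => ?_
    rw [Finsupp.linearCombination_single, one_smul,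
      Finsupp.support_single_ne_zero _ one_ne_zero, Finset.sum_singleton,
      Finsupp.single_eq_same, one_smul, starOf_proj K _ (hsg σ) h hh]
  have R : starComp K m n k (Finsupp.single (proj f) 1) (starElt K g h)
      = (l.factorial : K)⁻¹ • ∑ τ : Equiv.Perm (Fin l), starElt K f (g ∘ ⇑τ ∘ h) := by
    rw [starComp_eq_totalR, starElt, map_smul, map_sum]
    congr 1
    refine Finset.sum_congr rfl fun τ _ => ?_
    rw [Finsupp.linearCombination_single, one_smul,
      Finsupp.support_single_ne_zero _ one_ne_zero, Finset.sum_singleton,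
      Finsupp.single_eq_same, one_smul, starOf_proj K f hf _ (hth τ)]
  rw [L, R]
  simp only [starElt, Finset.smul_sum, smul_smul]
  rw [Finset.sum_comm]
  refine Finset.sum_congr rfl fun τ _ => Finset.sum_congr rfl fun σ _ => ?_
  rw [mul_comm]
  rfl
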